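/- Let q > 1 be an integer, χ a Dirichlet character mod q, m the smallest prime not dividing q. Then for all s = σ+it with σ ≥ 2, |-(m^s/(χ(m)·log m))·(L'/L)(s,χ) - 1| ≤ 2·(1 + 8m/σ)·(1 + 1/m)^{-σ}. -/

import Mathlib

open Real

noncomputable def Gfun (σ x : ℝ) : ℝ := (Real.log x / (σ-1) + 1/(σ-1)^2) * x ^ (1-σ)

lemma Gfun_nonneg {σ : ℝ} (hσ : 2 ≤ σ) {x : ℝ} (hx : 1 ≤ x) : 0 ≤ Gfun σ x := by
  have h1 : (0:ℝ) < σ - 1 := by linarith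
  have h2 : (0:ℝ) ≤ Real.log x := Real.log_nonneg hx
  have h3 : (0:ℝ) ≤ x ^ (1-σ) := Real.rpow_nonneg (by linarith) _
  unfold Gfun
  positivity

lemma log_mul_rpow_anti {σ : ℝ} (hσ : 2 ≤ σ) {a b : ℝ} (ha : 3 ≤ a) (hab : a ≤ b) :
    Real.log b * b ^ (-σ) ≤ Real.log a * a ^ (-σ) := by
  have ha0 : (0:ℝ) < a := by linarith
  have hb0 : (0:ℝ) < b := by linarith
  have he : Real.exp 1 ≤ a := by
    have := Real.exp_one_lt_d9; linarith
  have h1 : Real.log b / b ≤ Real.log a / a :=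
    Real.log_div_self_antitoneOn he (he.trans hab) hab
  have h2 : b ^ (1 - σ) ≤ a ^ (1 - σ) :=
    Real.rpow_le_rpow_of_nonpos ha0 hab (by linarith)
  have key : ∀ x : ℝ, 0 < x → Real.log x * x ^ (-σ) = (Real.log x / x) * x ^ (1-σ) := by
    intro x hx
    rw [show (1-σ:ℝ) = 1 + (-σ) by ring, Real.rpow_add hx, Real.rpow_one]
    field_simp
  rw [key a ha0, key b hb0]
  exact mul_le_mul h1 h2 (Real.rpow_nonneg hb0.le _)
    (div_nonneg (Real.log_nonneg (by linarith)) ha0.le)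

lemma hasDerivAt_Gfun {σ : ℝ} (hσ : 2 ≤ σ) {x : ℝ} (hx : 0 < x) :
    HasDerivAt (Gfun σ) (-(Real.log x * x ^ (-σ))) x := by
  have hσ1 : σ - 1 ≠ 0 := by linarith
  have h1 : HasDerivAt (fun y : ℝ => Real.log y / (σ-1) + 1/(σ-1)^2) (x⁻¹/(σ-1)) x :=
    ((Real.hasDerivAt_log hx.ne').div_const _).add_const _
  have h2 : HasDerivAt (fun y : ℝ => y ^ (1-σ)) ((1-σ) * x ^ (1-σ-1)) x :=
    Real.hasDerivAt_rpow_const (Or.inl hx.ne')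
  have h := h1.mul h2
  refine h.congr_deriv ?_
  symm
  rw [show (1-σ-1:ℝ) = -σ by ring,
    show (1-σ:ℝ) = 1 + (-σ) by ring, Real.rpow_add hx, Real.rpow_one]
  field_simp
  ring

lemma Gfun_step {σ : ℝ} (hσ : 2 ≤ σ) {n : ℕ} (hn : 3 ≤ n) :
    Real.log ((n:ℝ)+1) * ((n:ℝ)+1) ^ (-σ) ≤ Gfun σ n - Gfun σ ((n:ℝ)+1) := by
  have hn3 : (3:ℝ) ≤ (n:ℝ) := by exact_mod_cast hn
  have hab : (n:ℝ) < (n:ℝ)+1 := by linarith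
  obtain ⟨c, hc, hceq⟩ := exists_hasDerivAt_eq_slope (Gfun σ)
    (fun x => -(Real.log x * x ^ (-σ))) hab
    (fun x hx => (hasDerivAt_Gfun hσ (by simp at hx; linarith [hx.1])).continuousAt.continuousWithinAt)
    (fun x hx => hasDerivAt_Gfun hσ (by linarith [hx.1]))
  have hc1 : (3:ℝ) ≤ c := by linarith [hc.1]
  have hc2 : c ≤ (n:ℝ)+1 := le_of_lt hc.2
  have : Gfun σ n - Gfun σ ((n:ℝ)+1) = Real.log c * c ^ (-σ) := by
    have : -(Real.log c * c ^ (-σ)) = (Gfun σ ((n:ℝ)+1) - Gfun σ n) / ((n:ℝ)+1 - n) := hceq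
    rw [show ((n:ℝ)+1 - n) = 1 by ring, div_one] at this
    linarith
  rw [this]
  exact log_mul_rpow_anti hσ hc1 hc2

lemma summable_logmul {σ : ℝ} (hσ : 2 ≤ σ) :
    Summable (fun n : ℕ => Real.log n * (n:ℝ) ^ (-σ)) := by
  refine Summable.of_nonneg_of_le
    (fun n => mul_nonneg (Real.log_natCast_nonneg n) (Real.rpow_nonneg (Nat.cast_nonneg n) _))
    (fun n => ?_)
    ((Real.summable_nat_rpow.mpr (by norm_num : (-3/2:ℝ) < -1)).mul_left 2)
  rcases Nat.eq_zero_or_pos n with rfl | hn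
  · simp only [Nat.cast_zero, Real.log_zero, zero_mul]
    positivity
  · have hn1 : (1:ℝ) ≤ (n:ℝ) := by exact_mod_cast hn
    have h1 : Real.log n ≤ 2 * (n:ℝ) ^ ((1:ℝ)/2) := by
      have := Real.log_le_rpow_div (Nat.cast_nonneg n) (by norm_num : (0:ℝ) < 1/2)
      linarith
    calc Real.log n * (n:ℝ) ^ (-σ) ≤ (2 * (n:ℝ) ^ ((1:ℝ)/2)) * (n:ℝ) ^ (-σ) := by
          exact mul_le_mul_of_nonneg_right h1 (Real.rpow_nonneg (Nat.cast_nonneg n) _)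
      _ = 2 * (n:ℝ) ^ ((1:ℝ)/2 + (-σ)) := by
          rw [Real.rpow_add (by linarith : (0:ℝ) < (n:ℝ))]; ring
      _ ≤ 2 * (n:ℝ) ^ (-3/2:ℝ) := by
          have := Real.rpow_le_rpow_of_exponent_le hn1 (by linarith : (1:ℝ)/2 + (-σ) ≤ -3/2)
          linarith


lemma tail_bound {σ : ℝ} (hσ : 2 ≤ σ) {N : ℕ} (hN : 3 ≤ N) :
    ∑' k : ℕ, Real.log (k+N : ℕ) * ((k+N : ℕ):ℝ) ^ (-σ) ≤
      Real.log N * (N:ℝ) ^ (-σ) + Gfun σ N := by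
  set f : ℕ → ℝ := fun n => Real.log n * (n:ℝ) ^ (-σ) with hf
  have hsum : Summable f := summable_logmul hσ
  have hsum' : Summable (fun k => f (k + N)) := (summable_nat_add_iff N).mpr hsum
  have key : ∑' k : ℕ, f ((k+1) + N) ≤ Gfun σ N := by
    refine Real.tsum_le_of_sum_range_le
      (fun n => mul_nonneg (Real.log_natCast_nonneg _) (Real.rpow_nonneg (Nat.cast_nonneg _) _))
      (fun K => ?_)
    calc ∑ i ∈ Finset.range K, f ((i+1) + N)
        ≤ ∑ i ∈ Finset.range K, (Gfun σ ((N+i:ℕ):ℝ) - Gfun σ ((N+(i+1):ℕ):ℝ)) := by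
          refine Finset.sum_le_sum fun i _ => ?_
          have h := Gfun_step hσ (show 3 ≤ N+i by omega)
          have e1 : (((i+1)+N : ℕ):ℝ) = ((N+i:ℕ):ℝ) + 1 := by push_cast; ring
          have e2 : ((N+(i+1) : ℕ):ℝ) = ((N+i:ℕ):ℝ) + 1 := by push_cast; ring
          simp only [hf]
          rw [e1, e2]
          exact h
      _ = Gfun σ ((N+0:ℕ):ℝ) - Gfun σ ((N+K:ℕ):ℝ) :=
          Finset.sum_range_sub' (fun i => Gfun σ ((N+i:ℕ):ℝ)) K
      _ ≤ Gfun σ N := by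
          have h0 : ((N+0:ℕ):ℝ) = (N:ℝ) := by norm_num
          have h1 : (1:ℝ) ≤ ((N+K:ℕ):ℝ) := by exact_mod_cast (by omega : 1 ≤ N+K)
          have h2 := Gfun_nonneg hσ h1
          rw [h0]; linarith
  have := Summable.tsum_eq_zero_add hsum'
  show ∑' k : ℕ, f (k + N) ≤ f N + Gfun σ N
  rw [this]
  simp only [zero_add]
  linarith [key]

lemma final_arith {σ : ℝ} (hσ : 2 ≤ σ) {m : ℕ} (hm : 2 ≤ m) :
    (m:ℝ)^σ / Real.log m * (Real.log ((m:ℝ)+1) * ((m:ℝ)+1) ^ (-σ) + Gfun σ ((m:ℝ)+1)) ≤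
      2 * (1 + 8*m/σ) * (1 + 1/(m:ℝ)) ^ (-σ) := by
  have hM : (2:ℝ) ≤ (m:ℝ) := by exact_mod_cast hm
  set M : ℝ := (m:ℝ) with hMdef
  have hM0 : (0:ℝ) < M := by linarith
  have hN0 : (0:ℝ) < M + 1 := by linarith
  have hσ1 : (0:ℝ) < σ - 1 := by linarith
  have hσ0 : (0:ℝ) < σ := by linarith
  set A : ℝ := Real.log M with hA
  set B : ℝ := Real.log (M+1) with hB
  have hA069 : 0.6931 ≤ A := by
    have h2 : Real.log 2 ≤ A := Real.log_le_log (by norm_num) hM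
    have := Real.log_two_gt_d9
    linarith
  have hB0 : 0 ≤ B := Real.log_nonneg (by linarith)
  have hBA : B ≤ 2 * A := by
    have h1 : M + 1 ≤ M^2 := by nlinarith
    have h2 : B ≤ Real.log (M^2) := Real.log_le_log hN0 h1
    rw [Real.log_pow] at h2
    push_cast at h2
    linarith
  -- rewrite rpow identities
  have hP : (1 + 1/M) ^ (-σ) = M^σ * (M+1)^(-σ) := by
    rw [show (1:ℝ) + 1/M = (M+1)/M by field_simp,
      Real.div_rpow hN0.le hM0.le, Real.rpow_neg hN0.le, Real.rpow_neg hM0.le]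
    field_simp
  have hNσ : (M+1) ^ (1-σ) = (M+1) * (M+1)^(-σ) := by
    rw [show (1-σ:ℝ) = 1 + (-σ) by ring, Real.rpow_add hN0, Real.rpow_one]
  have hMσ0 : (0:ℝ) < M^σ := Real.rpow_pos_of_pos hM0 _
  have hNσ0 : (0:ℝ) < (M+1)^(-σ) := Real.rpow_pos_of_pos hN0 _
  have hA0 : (0:ℝ) < A := by linarith
  -- core inequality
  have core : B + (M+1) * B * (1/(σ-1)) + (M+1) * (1/(σ-1)^2) ≤ 2*A + 16*M*A*(1/σ) := by
    have ht : 1/(σ-1) ≤ 2/σ := by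
      rw [div_le_div_iff₀ hσ1 hσ0]; nlinarith
    have ht2 : 1/(σ-1)^2 ≤ 2/σ := by
      rw [div_le_div_iff₀ (by positivity) hσ0]; nlinarith
    have hNle : M + 1 ≤ 3/2 * M := by linarith
    have e1 : (M+1) * B * (1/(σ-1)) ≤ (3/2*M) * (2*A) * (2/σ) := by
      apply mul_le_mul (mul_le_mul hNle hBA hB0 (by linarith)) ht (by positivity) (by positivity)
    have e2 : (M+1) * (1/(σ-1)^2) ≤ (3/2*M) * (2/σ) := by
      apply mul_le_mul hNle ht2 (by positivity) (by linarith)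
    have e3 : 3*M*(1/σ) ≤ 10*M*A*(1/σ) := by
      have : (3:ℝ) ≤ 10*A := by linarith
      have hMu : (0:ℝ) ≤ M*(1/σ) := by positivity
      nlinarith
    have : (3/2*M) * (2*A) * (2/σ) = 6*M*A*(1/σ) := by field_simp; ring
    rw [this] at e1
    have : (3/2*M) * (2/σ) = 3*M*(1/σ) := by field_simp
    rw [this] at e2
    linarith
  -- put together
  unfold Gfun
  rw [hP, hNσ]
  rw [show (2:ℝ) * (1 + 8*M/σ) * (M^σ * (M+1)^(-σ))
      = M^σ * (M+1)^(-σ) / A * ((2*A + 16*M*A*(1/σ))) by field_simp; ring]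
  rw [show M^σ / A * (B * (M+1)^(-σ) + (B/(σ-1) + 1/(σ-1)^2) * ((M+1) * (M+1)^(-σ)))
      = M^σ * (M+1)^(-σ) / A * (B + (M+1) * B * (1/(σ-1)) + (M+1) * (1/(σ-1)^2)) by
        field_simp; ring]
  have hpos : (0:ℝ) ≤ M^σ * (M+1)^(-σ) / A := by positivity
  exact mul_le_mul_of_nonneg_left core hpos

open ArithmeticFunction in
open scoped LSeries.notation in
theorem stmt2 (q : ℕ) (hq : 1 < q) [NeZero q] (χ : DirichletCharacter ℂ q) (m : ℕ)
    (hm_prime : m.Prime) (hm_ndvd : ¬ m ∣ q)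
    (hm_min : ∀ p : ℕ, p.Prime → ¬ p ∣ q → m ≤ p)
    (s : ℂ) (hs : 2 ≤ s.re) :
    ‖-((m : ℂ) ^ s / (χ (m : ZMod q) * Real.log m)) *
        (deriv (DirichletCharacter.LFunction χ) s / DirichletCharacter.LFunction χ s) - 1‖ ≤
      2 * (1 + 8 * m / s.re) * (1 + 1 / (m : ℝ)) ^ (-s.re) := by
  have hs1 : 1 < s.re := by linarith
  have hm2 : 2 ≤ m := hm_prime.two_le
  have hm0 : m ≠ 0 := hm_prime.ne_zero
  -- character value at m is a unit
  have hcop : Nat.Coprime m q := (Nat.Prime.coprime_iff_not_dvd hm_prime).mpr hm_ndvd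
  have hunit : IsUnit ((m : ℕ) : ZMod q) := (ZMod.isUnit_iff_coprime m q).mpr hcop
  have hχnorm : ‖χ ((m : ℕ) : ZMod q)‖ = 1 := by
    have := χ.unit_norm_eq_one hunit.unit
    rwa [IsUnit.unit_spec] at this
  have hχne : χ ((m : ℕ) : ZMod q) ≠ 0 := by
    intro h; rw [h, norm_zero] at hχnorm; norm_num at hχnorm
  have hlogm : (0:ℝ) < Real.log m :=
    Real.log_pos (by exact_mod_cast hm_prime.one_lt)
  have hms_ne : (m:ℂ) ^ s ≠ 0 := by
    simp only [ne_eq, Complex.cpow_eq_zero_iff, not_and_or, not_not]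
    left
    exact_mod_cast hm0
  -- the logarithmic derivative identity
  have hL := DirichletCharacter.LSeries_twist_vonMangoldt_eq χ hs1
  rw [← DirichletCharacter.deriv_LFunction_eq_deriv_LSeries χ hs1,
    ← DirichletCharacter.LFunction_eq_LSeries χ hs1] at hL
  have hD : deriv (DirichletCharacter.LFunction χ) s / DirichletCharacter.LFunction χ s
      = - L (↗χ * ↗Λ) s := by
    rw [hL]; ring
  set c : ℂ := (m : ℂ) ^ s / (χ ((m : ℕ) : ZMod q) * (Real.log m : ℂ)) with hc
  have hterm_sum : Summable (LSeries.term (↗χ * ↗Λ) s) :=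
    DirichletCharacter.LSeriesSummable_twist_vonMangoldt χ hs1
  have hc1 : c * LSeries.term (↗χ * ↗Λ) s m = 1 := by
    rw [LSeries.term_of_ne_zero hm0]
    show c * ((χ ((m : ℕ) : ZMod q) * (Λ m : ℂ)) / (m:ℂ) ^ s) = 1
    rw [ArithmeticFunction.vonMangoldt_apply_prime hm_prime, hc]
    have hlogC : ((Real.log m : ℝ) : ℂ) ≠ 0 := by exact_mod_cast hlogm.ne'
    rw [div_mul_div_comm, mul_comm ((m:ℂ)^s) (χ ((m : ℕ) : ZMod q) * (Real.log m : ℂ)),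
      div_self (mul_ne_zero (mul_ne_zero hχne hlogC) hms_ne)]
  set R : ℂ := ∑' n, if n = m then 0 else LSeries.term (↗χ * ↗Λ) s n with hR
  have key : -c * (deriv (DirichletCharacter.LFunction χ) s /
      DirichletCharacter.LFunction χ s) - 1 = c * R := by
    rw [hD]
    have h1 : L (↗χ * ↗Λ) s = LSeries.term (↗χ * ↗Λ) s m + R :=
      Summable.tsum_eq_add_tsum_ite hterm_sum m
    calc -c * (- L (↗χ * ↗Λ) s) - 1 = c * L (↗χ * ↗Λ) s - 1 := by ring
      _ = c * LSeries.term (↗χ * ↗Λ) s m + c * R - 1 := by rw [h1]; ring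
      _ = c * R := by rw [hc1]; ring
  rw [key, norm_mul]
  -- norm of c
  have hcnorm : ‖c‖ = (m:ℝ) ^ s.re / Real.log m := by
    rw [hc, norm_div, norm_mul, Complex.norm_natCast_cpow_of_pos hm_prime.pos, hχnorm, one_mul,
      Complex.norm_real, Real.norm_eq_abs, abs_of_pos hlogm]
  -- bound on R
  set g : ℕ → ℝ := fun n => if n ≤ m then 0 else Real.log n * (n:ℝ) ^ (-s.re) with hg
  have hgnonneg : ∀ n, 0 ≤ g n := by
    intro n
    rw [hg]
    dsimp only
    split
    · exact le_refl 0
    · exact mul_nonneg (Real.log_natCast_nonneg _) (Real.rpow_nonneg (Nat.cast_nonneg _) _)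
  have hgsum : Summable g := by
    refine Summable.of_nonneg_of_le hgnonneg (fun n => ?_) (summable_logmul hs)
    rw [hg]; dsimp only
    split
    · exact mul_nonneg (Real.log_natCast_nonneg _) (Real.rpow_nonneg (Nat.cast_nonneg _) _)
    · exact le_refl _
  have hbound : ∀ n, ‖if n = m then 0 else LSeries.term (↗χ * ↗Λ) s n‖ ≤ g n := by
    intro n
    by_cases hnm : n = m
    · subst hnm
      rw [if_pos rfl, norm_zero]
      exact hgnonneg n
    rw [if_neg hnm]
    by_cases hn0 : n = 0
    · subst hn0
      simp only [LSeries.term_zero, norm_zero]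
      exact hgnonneg 0
    by_cases hle : n ≤ m
    · -- the coefficient vanishes
      have hcoeff : (↗χ * ↗Λ) n = 0 := by
        by_cases hΛ : Λ n = 0
        · show χ n * (Λ n : ℂ) = 0
          rw [hΛ]; simp
        · obtain ⟨p, k, hp, hk, rfl⟩ := ArithmeticFunction.vonMangoldt_ne_zero_iff.mp hΛ
          have hpprime : p.Prime := hp.nat_prime
          by_cases hpq : p ∣ q
          · show χ (p^k : ℕ) * ((Λ (p^k) : ℝ) : ℂ) = 0
            have hnu : ¬ IsUnit (((p^k : ℕ) : ZMod q)) := by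
              rw [ZMod.isUnit_iff_coprime]
              intro hco
              have : p ∣ Nat.gcd (p^k) q := Nat.dvd_gcd (dvd_pow_self p hk.ne') hpq
              have h1 : p ∣ 1 := hco ▸ this
              exact hpprime.one_lt.ne' (Nat.dvd_one.mp h1)
            rw [χ.map_nonunit hnu]
            simp
          · exfalso
            have hpm : m ≤ p := hm_min p hpprime hpq
            have : p ≤ p ^ k := Nat.le_self_pow hk.ne' p
            omega
      rw [LSeries.term_of_ne_zero hn0, hcoeff, zero_div, norm_zero]
      exact hgnonneg n
    · push_neg at hle
      have hgn : g n = Real.log n * (n:ℝ) ^ (-s.re) := by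
        rw [hg]; dsimp only; rw [if_neg (by omega)]
      rw [hgn, LSeries.term_of_ne_zero hn0]
      have hn_pos : 0 < n := Nat.pos_of_ne_zero hn0
      rw [norm_div, Complex.norm_natCast_cpow_of_pos hn_pos]
      show ‖χ n * ((Λ n : ℝ) : ℂ)‖ / (n:ℝ) ^ s.re ≤ _
      rw [norm_mul, Complex.norm_real, Real.norm_eq_abs, abs_of_nonneg vonMangoldt_nonneg]
      rw [Real.rpow_neg (Nat.cast_nonneg n), ← div_eq_mul_inv]
      have hnum : ‖χ ((n : ℕ) : ZMod q)‖ * Λ n ≤ Real.log n := by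
        calc ‖χ ((n : ℕ) : ZMod q)‖ * Λ n ≤ 1 * Real.log n := by
              apply mul_le_mul (χ.norm_le_one _) vonMangoldt_le_log vonMangoldt_nonneg zero_le_one
          _ = Real.log n := one_mul _
      gcongr
  have hRle : ‖R‖ ≤ ∑' n, g n := tsum_of_norm_bounded hgsum.hasSum hbound
  -- tail estimate
  have htail : ∑' n, g n ≤ Real.log (m+1 : ℕ) * ((m+1 : ℕ):ℝ) ^ (-s.re) + Gfun s.re (m+1 : ℕ) := by
    rw [← Summable.sum_add_tsum_nat_add (m+1) hgsum]
    have h0 : ∑ i ∈ Finset.range (m+1), g i = 0 := by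
      apply Finset.sum_eq_zero
      intro i hi
      rw [hg]; dsimp only
      rw [if_pos (by simp at hi; omega)]
    rw [h0, zero_add]
    have heq : ∀ k : ℕ, g (k + (m+1)) = Real.log ((k + (m+1) : ℕ)) * ((k + (m+1) : ℕ):ℝ) ^ (-s.re) := by
      intro k
      rw [hg]; dsimp only
      rw [if_neg (by omega)]
    rw [tsum_congr heq]
    exact tail_bound hs (by omega)
  calc ‖c‖ * ‖R‖ ≤ ((m:ℝ) ^ s.re / Real.log m) *
        (Real.log (m+1 : ℕ) * ((m+1 : ℕ):ℝ) ^ (-s.re) + Gfun s.re (m+1 : ℕ)) := by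
        rw [hcnorm]
        apply mul_le_mul_of_nonneg_left (le_trans hRle htail)
        positivity
    _ ≤ 2 * (1 + 8 * m / s.re) * (1 + 1 / (m : ℝ)) ^ (-s.re) := by
        have := final_arith hs hm2
        push_cast
        push_cast at this
        exact this
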